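/- Let H be a complex Hilbert space, X and A finite nonempty sets, and for each x ∈ X let (E_{x,a})_{a∈A} be a family of positive bounded operators on H with Σ_{a∈A} E_{x,a} = I_H. Then there exist a complex Hilbert space K, a linear isometry V : H → K, and orthogonal projections P_{x,a} on K (x ∈ X, a ∈ A) with Σ_{a∈A} P_{x,a} = I_K for every x ∈ X, such that E_{x,a} = V* P_{x,a} V for all x ∈ X and a ∈ A. In particular, every Bell scenario B_{X,A}, whose vertex set is X × A and whose edges are the sets {x} × A (x ∈ X), is dilating. -/

import Mathlib

noncomputable section

structure HilbertC where
  carrier : Type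
  [normed : NormedAddCommGroup carrier]
  [ips : InnerProductSpace ℂ carrier]
  [complete : CompleteSpace carrier]

attribute [instance] HilbertC.normed HilbertC.ips HilbertC.complete

/-- A positive operator representation of the hypergraph with edge set `E`. -/
def IsPOR {V : Type} [Fintype V] (E : Finset (Finset V)) {H : Type}
    [NormedAddCommGroup H] [InnerProductSpace ℂ H] [CompleteSpace H]
    (A : V → H →L[ℂ] H) : Prop :=
  (∀ x, (A x).IsPositive) ∧ ∀ e ∈ E, ∑ x ∈ e, A x = 1

/-- A projective representation of the hypergraph with edge set `E`. -/
def IsPR {V : Type} [Fintype V] (E : Finset (Finset V)) {H : Type}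
    [NormedAddCommGroup H] [InnerProductSpace ℂ H] [CompleteSpace H]
    (A : V → H →L[ℂ] H) : Prop :=
  (∀ x, IsSelfAdjoint (A x) ∧ IsIdempotentElem (A x)) ∧ ∀ e ∈ E, ∑ x ∈ e, A x = 1

/-- The POR `A` dilates to a projective representation. -/
def DilatesToPR {V : Type} [Fintype V] (E : Finset (Finset V)) {H : Type}
    [NormedAddCommGroup H] [InnerProductSpace ℂ H] [CompleteSpace H]
    (A : V → H →L[ℂ] H) : Prop :=
  ∃ (K : HilbertC) (B : V → K.carrier →L[ℂ] K.carrier) (Vi : H →L[ℂ] K.carrier),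
    IsPR E B ∧ Isometry Vi ∧
    ∀ x, A x = (ContinuousLinearMap.adjoint Vi).comp ((B x).comp Vi)

/-- The hypergraph `(V, E)` is dilating. -/
def Dilating (V : Type) [Fintype V] (E : Finset (Finset V)) : Prop :=
  ∀ (H : HilbertC) (A : V → H.carrier →L[ℂ] H.carrier), IsPOR E A → DilatesToPR E A

set_option synthInstance.maxHeartbeats 2000000
set_option maxHeartbeats 2000000
set_option linter.unusedSectionVars false

namespace Stmt9Aux

open ContinuousLinearMap
local notation "⟪" x ", " y "⟫" => @inner ℂ _ _ x y

variable {A : Type} [Fintype A] [DecidableEq A]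
variable {K : Type} [NormedAddCommGroup K] [InnerProductSpace ℂ K] [CompleteSpace K]

instance piLpComplete : CompleteSpace (PiLp 2 (fun _ : A => K)) :=
  inferInstance

lemma sa_inner {T : K →L[ℂ] K} (hT : IsSelfAdjoint T) (u v : K) :
    ⟪T u, v⟫ = ⟪u, T v⟫ := by
  rw [← adjoint_inner_left, ← star_eq_adjoint, hT]

/-- coordinate projection on the Hilbert direct sum -/
def coordP (a : A) : PiLp 2 (fun _ : A => K) →L[ℂ] PiLp 2 (fun _ : A => K) :=
  ((PiLp.continuousLinearEquiv 2 ℂ (fun _ : A => K)).symm : (∀ _ : A, K) →L[ℂ] _).comp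
    ((ContinuousLinearMap.pi (fun b : A => if b = a then ContinuousLinearMap.proj a else 0)).comp
      ((PiLp.continuousLinearEquiv 2 ℂ (fun _ : A => K)) : _ →L[ℂ] (∀ _ : A, K)))

omit [Fintype A] [CompleteSpace K] in
lemma coordP_apply (a : A) (f : PiLp 2 (fun _ : A => K)) (b : A) :
    (coordP a f) b = if b = a then f a else 0 := by
  simp only [coordP, ContinuousLinearMap.comp_apply]
  by_cases h : b = a <;> simp [h]

omit [CompleteSpace K] in
lemma coordP_inner_left (a : A) (f g : PiLp 2 (fun _ : A => K)) :
    ⟪coordP a f, g⟫ = ⟪f a, g a⟫ := by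
  rw [PiLp.inner_apply, Finset.sum_eq_single a]
  · rw [coordP_apply]; simp
  · intro b _ hb; rw [coordP_apply]; simp [hb]
  · simp

lemma coordP_selfAdjoint' (a : A) :
    IsSelfAdjoint (coordP (A := A) (K := K) a) := by
  rw [IsSelfAdjoint, star_eq_adjoint]
  symm
  rw [ContinuousLinearMap.eq_adjoint_iff]
  intro f g
  rw [coordP_inner_left, ← inner_conj_symm f (coordP a g), coordP_inner_left, inner_conj_symm]

omit [CompleteSpace K] in
lemma coordP_idem (a : A) : IsIdempotentElem (coordP (A := A) (K := K) a) := by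
  rw [IsIdempotentElem]
  refine ContinuousLinearMap.ext fun f => PiLp.ext fun b => ?_
  rw [ContinuousLinearMap.mul_apply, coordP_apply, coordP_apply]
  by_cases h : b = a <;> simp [h, coordP_apply]

lemma coordP_sum : ∑ a, coordP (A := A) (K := K) a = 1 := by
  refine ContinuousLinearMap.ext fun f => ?_
  apply ext_inner_right ℂ
  intro g
  rw [ContinuousLinearMap.sum_apply, sum_inner]
  simp only [coordP_inner_left]
  rw [← PiLp.inner_apply]
  simp

/-- The embedding `h ↦ (√(E a) h)_a`. -/
def stepV (E : A → K →L[ℂ] K) : K →L[ℂ] PiLp 2 (fun _ : A => K) :=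
  ((PiLp.continuousLinearEquiv 2 ℂ (fun _ : A => K)).symm : (∀ _ : A, K) →L[ℂ] _).comp
    (ContinuousLinearMap.pi (fun a : A => CFC.sqrt (E a)))

omit [Fintype A] [DecidableEq A] in
lemma stepV_apply (E : A → K →L[ℂ] K) (h : K) (a : A) :
    (stepV E h) a = CFC.sqrt (E a) h := rfl

lemma step (E : A → K →L[ℂ] K) (hpos : ∀ a, (E a).IsPositive) (hsum : ∑ a, E a = 1) :
    (∀ h h', ⟪stepV E h, stepV E h'⟫ = ⟪h, h'⟫) ∧
    (∀ a, E a = (adjoint (stepV E)).comp ((coordP a).comp (stepV E))) := by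
  have hsq : ∀ a, CFC.sqrt (E a) * CFC.sqrt (E a) = E a := fun a =>
    CFC.sqrt_mul_sqrt_self (E a) ((ContinuousLinearMap.nonneg_iff_isPositive (E a)).mpr (hpos a))
  have hsa : ∀ a, IsSelfAdjoint (CFC.sqrt (E a)) := fun a =>
    IsSelfAdjoint.of_nonneg (CFC.sqrt_nonneg _)
  have hsqinner : ∀ (a : A) (h h' : K),
      ⟪CFC.sqrt (E a) h, CFC.sqrt (E a) h'⟫ = ⟪E a h, h'⟫ := by
    intro a h h'
    calc ⟪CFC.sqrt (E a) h, CFC.sqrt (E a) h'⟫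
        = ⟪h, CFC.sqrt (E a) (CFC.sqrt (E a) h')⟫ := sa_inner (hsa a) _ _
      _ = ⟪h, E a h'⟫ := by rw [← ContinuousLinearMap.mul_apply, hsq]
      _ = ⟪E a h, h'⟫ := (sa_inner (hpos a).isSelfAdjoint _ _).symm
  constructor
  · intro h h'
    rw [PiLp.inner_apply]
    simp only [stepV_apply]
    calc ∑ a, ⟪CFC.sqrt (E a) h, CFC.sqrt (E a) h'⟫ = ∑ a, ⟪E a h, h'⟫ :=
          Finset.sum_congr rfl (fun a _ => hsqinner a h h')
      _ = ⟪(∑ a, E a) h, h'⟫ := by rw [← sum_inner]; simp [ContinuousLinearMap.sum_apply, sum_inner]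
      _ = ⟪h, h'⟫ := by rw [hsum]; simp
  · intro a
    refine ContinuousLinearMap.ext fun h => ?_
    apply ext_inner_right ℂ
    intro y
    rw [ContinuousLinearMap.comp_apply, ContinuousLinearMap.comp_apply, adjoint_inner_left,
      coordP_inner_left, stepV_apply, stepV_apply, hsqinner]

section Ext
variable {K' : Type} [NormedAddCommGroup K'] [InnerProductSpace ℂ K'] [CompleteSpace K']
variable (W : K →L[ℂ] K')

omit [Fintype A] [DecidableEq A]

lemma isom_of_inner (hW : ∀ h h', ⟪W h, W h'⟫ = ⟪h, h'⟫) : Isometry W := by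
  refine AddMonoidHomClass.isometry_of_norm W fun h => ?_
  rw [@norm_eq_sqrt_re_inner ℂ, @norm_eq_sqrt_re_inner ℂ K, hW]

lemma adjW_W (hW : ∀ h h', ⟪W h, W h'⟫ = ⟪h, h'⟫) (u : K) : adjoint W (W u) = u := by
  apply ext_inner_right ℂ
  intro v
  rw [adjoint_inner_left, hW]

/-- the extension of an operator along the isometry `W`, with junk `c` -/
def extO (T : K →L[ℂ] K) (c : K' →L[ℂ] K') : K' →L[ℂ] K' :=
  W ∘L T ∘L adjoint W + c

lemma extO_compress (hWW : ∀ u, adjoint W (W u) = u) (T : K →L[ℂ] K) (c : K' →L[ℂ] K')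
    (hc : ∀ u, c (W u) = 0) :
    adjoint W ∘L (extO W T c ∘L W) = T := by
  refine ContinuousLinearMap.ext fun u => ?_
  simp only [extO, ContinuousLinearMap.comp_apply, ContinuousLinearMap.add_apply, hc, add_zero,
    map_add, map_zero]
  rw [hWW, hWW]

lemma R_apply_W (hWW : ∀ u, adjoint W (W u) = u) (u : K) : (1 - W ∘L adjoint W) (W u) = 0 := by
  simp [ContinuousLinearMap.sub_apply, hWW]

lemma conj_selfAdjoint {T : K →L[ℂ] K} (hT : IsSelfAdjoint T) :
    IsSelfAdjoint (W ∘L T ∘L adjoint W) := by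
  rw [IsSelfAdjoint, star_eq_adjoint, adjoint_comp, adjoint_comp, adjoint_adjoint]
  rw [← ContinuousLinearMap.comp_assoc]
  congr 1
  · rw [← star_eq_adjoint, hT]

lemma R_selfAdjoint : IsSelfAdjoint (1 - W ∘L adjoint W) := by
  rw [IsSelfAdjoint, star_sub, star_one, star_eq_adjoint, adjoint_comp, adjoint_adjoint]

lemma conj_idem (hWW : ∀ u, adjoint W (W u) = u) {T : K →L[ℂ] K} (hT : IsIdempotentElem T) :
    IsIdempotentElem (W ∘L T ∘L adjoint W) := by
  rw [IsIdempotentElem]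
  refine ContinuousLinearMap.ext fun v => ?_
  simp only [ContinuousLinearMap.mul_apply, ContinuousLinearMap.comp_apply, hWW]
  rw [← ContinuousLinearMap.mul_apply T T, hT]

lemma R_idem (hWW : ∀ u, adjoint W (W u) = u) : IsIdempotentElem (1 - W ∘L adjoint W) := by
  rw [IsIdempotentElem]
  refine ContinuousLinearMap.ext fun v => ?_
  simp only [ContinuousLinearMap.mul_apply, ContinuousLinearMap.sub_apply,
    ContinuousLinearMap.one_apply, ContinuousLinearMap.comp_apply, map_sub, hWW]
  abel

lemma proj_pos {T : K' →L[ℂ] K'} (hsa : IsSelfAdjoint T) (hidem : IsIdempotentElem T) :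
    T.IsPositive := by
  refine ⟨ContinuousLinearMap.isSelfAdjoint_iff_isSymmetric.mp hsa, fun v => ?_⟩
  rw [ContinuousLinearMap.reApplyInnerSelf]
  have h1 : T v = T (T v) := by rw [← ContinuousLinearMap.mul_apply, hidem]
  rw [h1, sa_inner hsa]
  exact inner_self_nonneg

lemma extO_proj (hWW : ∀ u, adjoint W (W u) = u) {T : K →L[ℂ] K} (hsa : IsSelfAdjoint T) (hidem : IsIdempotentElem T) :
    IsSelfAdjoint (extO W T (1 - W ∘L adjoint W)) ∧
    IsIdempotentElem (extO W T (1 - W ∘L adjoint W)) := by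
  constructor
  · exact (conj_selfAdjoint W hsa).add (R_selfAdjoint W)
  · rw [IsIdempotentElem]
    refine ContinuousLinearMap.ext fun v => ?_
    simp only [extO, ContinuousLinearMap.mul_apply, ContinuousLinearMap.add_apply,
      ContinuousLinearMap.comp_apply, ContinuousLinearMap.sub_apply,
      ContinuousLinearMap.one_apply, map_add, map_sub, hWW]
    have hTT : ∀ u, T (T u) = T u := fun u => by
      rw [← ContinuousLinearMap.mul_apply T T, hidem]
    simp [hTT]

end Ext


section Key

lemma key {X A : Type} [Fintype X] [Fintype A] [DecidableEq X] [DecidableEq A] [Nonempty A]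
    {H : Type} [NormedAddCommGroup H] [InnerProductSpace ℂ H] [CompleteSpace H]
    (Em : X → A → H →L[ℂ] H)
    (hpos : ∀ x a, (Em x a).IsPositive)
    (hsum : ∀ x, ∑ a, Em x a = 1) (S : Finset X) :
    ∃ (K : HilbertC) (W : H →L[ℂ] K.carrier) (Q : X → A → K.carrier →L[ℂ] K.carrier),
      (∀ h h', ⟪W h, W h'⟫ = ⟪h, h'⟫) ∧
      (∀ x a, (Q x a).IsPositive) ∧
      (∀ x, ∑ a, Q x a = 1) ∧
      (∀ x a, Em x a = (adjoint W).comp ((Q x a).comp W)) ∧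
      (∀ x ∈ S, ∀ a, IsSelfAdjoint (Q x a) ∧ IsIdempotentElem (Q x a)) := by
  classical
  induction S using Finset.induction_on with
  | empty =>
      have hadj1 : adjoint (1 : H →L[ℂ] H) = 1 := by
        rw [← star_eq_adjoint, star_one]
      refine ⟨⟨H⟩, 1, Em, by simp, hpos, hsum, ?_, by simp⟩
      intro x a
      rw [hadj1]
      ext h
      simp
  | @insert x0 S hx0 ih =>
      obtain ⟨K, W, Q, hW, hQpos, hQsum, hQcomp, hQproj⟩ := ih
      obtain ⟨hW0, hcomp0⟩ := step (Q x0) (fun a => hQpos x0 a) (hQsum x0)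
      set W0 : K.carrier →L[ℂ] PiLp 2 (fun _ : A => K.carrier) := stepV (Q x0) with hW0def
      have hWW0 : ∀ u, adjoint W0 (W0 u) = u := adjW_W W0 hW0
      set R : PiLp 2 (fun _ : A => K.carrier) →L[ℂ] PiLp 2 (fun _ : A => K.carrier) :=
        1 - W0 ∘L adjoint W0 with hRdef
      obtain ⟨a0⟩ := (inferInstance : Nonempty A)
      set Q' : X → A → PiLp 2 (fun _ : A => K.carrier) →L[ℂ] PiLp 2 (fun _ : A => K.carrier) :=
        fun x a => if x = x0 then coordP a else extO W0 (Q x a) (if a = a0 then R else 0)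
        with hQ'def
      have hRproj : IsSelfAdjoint R ∧ IsIdempotentElem R := ⟨R_selfAdjoint W0, R_idem W0 hWW0⟩
      have hjunkW : ∀ (a : A) (u : K.carrier), (if a = a0 then R else 0) (W0 u) = 0 := by
        intro a u
        by_cases h : a = a0
        · simp only [h, if_pos rfl, hRdef]
          exact R_apply_W W0 hWW0 u
        · simp [h]
      refine ⟨⟨PiLp 2 (fun _ : A => K.carrier)⟩, W0 ∘L W, Q', ?_, ?_, ?_, ?_, ?_⟩
      · intro h h'
        simp only [ContinuousLinearMap.comp_apply]
        rw [hW0, hW]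
      · intro x a
        by_cases h : x = x0
        · simp only [hQ'def, h, if_pos rfl]
          exact proj_pos (coordP_selfAdjoint' a) (coordP_idem a)
        · simp only [hQ'def, if_neg h, extO]
          refine IsPositive.add ((hQpos x a).conj_adjoint W0) ?_
          by_cases ha : a = a0
          · simp only [ha, if_pos rfl]
            exact proj_pos hRproj.1 hRproj.2
          · simp only [if_neg ha]
            exact ⟨ContinuousLinearMap.isSelfAdjoint_iff_isSymmetric.mp (by rw [IsSelfAdjoint]; exact star_zero _), fun v => by
              simp [ContinuousLinearMap.reApplyInnerSelf]⟩
      · intro x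
        by_cases h : x = x0
        · simp only [hQ'def, h, if_pos rfl]
          exact coordP_sum
        · simp only [hQ'def, if_neg h, extO]
          rw [Finset.sum_add_distrib]
          have h1 : ∑ a, W0 ∘L Q x a ∘L adjoint W0 = W0 ∘L (∑ a, Q x a) ∘L adjoint W0 := by
            ext v
            simp [ContinuousLinearMap.sum_apply, ContinuousLinearMap.comp_apply, ← map_sum]
          have h2 : (∑ a, if a = a0 then R else 0) = R := by
            rw [Finset.sum_ite_eq' Finset.univ a0 (fun _ => R)]
            simp
          rw [h1, h2, hQsum x, hRdef]
          ext v
          simp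
      · intro x a
        have hmid : adjoint W0 ∘L (Q' x a ∘L W0) = Q x a := by
          by_cases h : x = x0
          · simp only [hQ'def, h, if_pos rfl]
            exact (hcomp0 a).symm
          · simp only [hQ'def, if_neg h]
            exact extO_compress W0 hWW0 (Q x a) _ (hjunkW a)
        rw [hQcomp x a]
        ext h
        have := congrArg (fun T => T (W h)) hmid
        simp only [ContinuousLinearMap.comp_apply] at this ⊢
        rw [adjoint_comp]
        simp only [ContinuousLinearMap.comp_apply]
        rw [this]
      · intro x hx a
        rcases Finset.mem_insert.mp hx with h | h
        · simp only [hQ'def, h, if_pos rfl]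
          exact ⟨coordP_selfAdjoint' a, coordP_idem a⟩
        · have hxne : x ≠ x0 := fun he => hx0 (he ▸ h)
          have hxp := hQproj x h a
          by_cases ha : a = a0
          · subst ha
            simp only [hQ'def, if_neg hxne, if_pos rfl, hRdef]
            exact extO_proj W0 hWW0 hxp.1 hxp.2
          · simp only [hQ'def, if_neg hxne, if_neg ha, extO, add_zero]
            exact ⟨conj_selfAdjoint W0 hxp.1, conj_idem W0 hWW0 hxp.2⟩

lemma main {X A : Type} [Fintype X] [Fintype A] [DecidableEq X] [DecidableEq A] [Nonempty A]
    {H : Type} [NormedAddCommGroup H] [InnerProductSpace ℂ H] [CompleteSpace H]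
    (Em : X → A → H →L[ℂ] H)
    (hpos : ∀ x a, (Em x a).IsPositive)
    (hsum : ∀ x, ∑ a, Em x a = 1) :
    ∃ (K : HilbertC) (Vi : H →L[ℂ] K.carrier)
        (P : X → A → K.carrier →L[ℂ] K.carrier),
        Isometry Vi ∧
        (∀ x a, IsSelfAdjoint (P x a) ∧ IsIdempotentElem (P x a)) ∧
        (∀ x, ∑ a, P x a = 1) ∧
        (∀ x a, Em x a = (adjoint Vi).comp ((P x a).comp Vi)) := by
  obtain ⟨K, W, Q, hW, _, hQsum, hQcomp, hQproj⟩ := key Em hpos hsum Finset.univ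
  exact ⟨K, W, Q, isom_of_inner W hW, fun x a => hQproj x (Finset.mem_univ x) a, hQsum, hQcomp⟩

end Key

end Stmt9Aux

theorem stmt9 (X A : Type) [Fintype X] [Fintype A] [DecidableEq X] [DecidableEq A]
    [Nonempty X] [Nonempty A]
    (H : Type) [NormedAddCommGroup H] [InnerProductSpace ℂ H] [CompleteSpace H]
    (Em : X → A → H →L[ℂ] H)
    (hpos : ∀ x a, (Em x a).IsPositive)
    (hsum : ∀ x, ∑ a, Em x a = 1) :
    (∃ (K : HilbertC) (Vi : H →L[ℂ] K.carrier)
        (P : X → A → K.carrier →L[ℂ] K.carrier),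
        Isometry Vi ∧
        (∀ x a, IsSelfAdjoint (P x a) ∧ IsIdempotentElem (P x a)) ∧
        (∀ x, ∑ a, P x a = 1) ∧
        (∀ x a, Em x a = (ContinuousLinearMap.adjoint Vi).comp ((P x a).comp Vi))) ∧
    Dilating (X × A) (Finset.univ.image (fun x : X => {x} ×ˢ (Finset.univ : Finset A))) := by
  constructor
  · obtain ⟨K, Vi, P, h1, h2, h3, h4⟩ := Stmt9Aux.main Em hpos hsum
    exact ⟨K, Vi, P, h1, h2, h3, h4⟩
  · intro H' Aop hPOR
    obtain ⟨hpos', hsum'⟩ := hPOR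
    have hsum2 : ∀ x : X, ∑ a, Aop (x, a) = 1 := by
      intro x
      have he : ({x} ×ˢ (Finset.univ : Finset A)) ∈
          Finset.univ.image (fun x : X => {x} ×ˢ (Finset.univ : Finset A)) :=
        Finset.mem_image_of_mem _ (Finset.mem_univ x)
      have := hsum' _ he
      rwa [Finset.sum_product, Finset.sum_singleton] at this
    obtain ⟨K, Vi, P, h1, h2, h3, h4⟩ :=
      Stmt9Aux.main (fun x a => Aop (x, a)) (fun x a => hpos' (x, a)) hsum2
    refine ⟨K, fun p => P p.1 p.2, Vi, ⟨fun p => h2 p.1 p.2, ?_⟩, h1, fun p => h4 p.1 p.2⟩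
    intro e he
    obtain ⟨x, -, rfl⟩ := Finset.mem_image.mp he
    rw [Finset.sum_product, Finset.sum_singleton]
    exact h3 x
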